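/- arXiv:2506.08062 — 3 statements merged into one kernel-verified Lean document; each statement's English description precedes it below -/
import Mathlib

section
/- Let C be the Bellman-flow feasible set of a finite MDP, let u_i : ℝ → ℝ (i = 1,…,I) be concave and differentiable, let f : ℝ → ℝ be strictly convex and differentiable, let β > 0, and let d_D : S×A → ℝ be positive. Define F(d) = Σ_i u_i(J_i(d)) − β Σ_{s,a} d_D(s,a) f(d(s,a)/d_D(s,a)) and, for weights μ ∈ ℝ^I, G_μ(d) = Σ_i μ_i J_i(d) − β Σ_{s,a} d_D(s,a) f(d(s,a)/d_D(s,a)). If d* maximizes F over C and μ*_i = u_i'(J_i(d*)) for every i, then d* is the unique maximizer of G_{μ*} over C. (Equivalence between regularized fair MORL and regularized linear MORL with the optimal implicit preference weights.) -/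
open scoped BigOperators

/-- Equivalence between regularized fair MORL and regularized linear MORL with the
optimal implicit preference weights: if `d*` maximizes the regularized welfare objective
`F` over the Bellman-flow feasible set `C`, and `μ*ᵢ = uᵢ'(Jᵢ(d*))`, then `d*` is the
unique maximizer over `C` of the regularized linear objective `G` with weights `μ*`. -/
theorem fairdice_equiv_regularized_linear
    {S A : Type*} [Fintype S] [Fintype A] [Nonempty S] [Nonempty A]
    (T : S → A → S → ℝ) (hT : ∀ s a s', 0 ≤ T s a s')
    (hT1 : ∀ s a, ∑ s', T s a s' = 1)
    (p0 : S → ℝ) (hp0 : ∀ s, 0 ≤ p0 s) (hp01 : ∑ s, p0 s = 1)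
    (γ : ℝ) (hγ0 : 0 ≤ γ) (hγ1 : γ < 1)
    (I : ℕ) (u : Fin I → ℝ → ℝ)
    (hu : ∀ i, ConcaveOn ℝ Set.univ (u i))
    (hud : ∀ i, Differentiable ℝ (u i))
    (f : ℝ → ℝ) (hf : StrictConvexOn ℝ Set.univ f) (hfd : Differentiable ℝ f)
    (β : ℝ) (hβ : 0 < β)
    (dD : S × A → ℝ) (hdD : ∀ sa, 0 < dD sa)
    (r : Fin I → S × A → ℝ)
    (J : Fin I → (S × A → ℝ) → ℝ)
    (hJ : ∀ i d, J i d = ∑ sa : S × A, d sa * r i sa)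
    (C : Set (S × A → ℝ))
    (hC : C = {d | (∀ sa, 0 ≤ d sa) ∧
      ∀ s, ∑ a, d (s, a) =
        (1 - γ) * p0 s + γ * ∑ sa : S × A, T sa.1 sa.2 s * d sa})
    (F : (S × A → ℝ) → ℝ)
    (hF : ∀ d, F d = (∑ i, u i (J i d)) - β * ∑ sa : S × A, dD sa * f (d sa / dD sa))
    (dstar : S × A → ℝ) (hdstarC : dstar ∈ C)
    (hdstarMax : ∀ d ∈ C, F d ≤ F dstar)
    (μ : Fin I → ℝ) (hμ : ∀ i, μ i = deriv (u i) (J i dstar))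
    (G : (S × A → ℝ) → ℝ)
    (hG : ∀ d, G d = (∑ i, μ i * J i d) - β * ∑ sa : S × A, dD sa * f (d sa / dD sa)) :
    (∀ d ∈ C, G d ≤ G dstar) ∧
    (∀ d ∈ C, (∀ d' ∈ C, G d' ≤ G d) → d = dstar) := by
  classical
  -- abbreviation for the regularizer
  set Rg : (S × A → ℝ) → ℝ := fun d => ∑ sa : S × A, dD sa * f (d sa / dD sa) with hRg
  -- C is convex
  have Ccvx : ∀ t : ℝ, 0 ≤ t → t ≤ 1 → ∀ d1 ∈ C, ∀ d2 ∈ C,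
      (fun sa => (1 - t) * d1 sa + t * d2 sa) ∈ C := by
    intro t ht0 ht1 d1 h1 d2 h2
    rw [hC] at h1 h2 ⊢
    obtain ⟨h1n, h1f⟩ := h1
    obtain ⟨h2n, h2f⟩ := h2
    constructor
    · intro sa
      have hn1 := h1n sa
      have hn2 := h2n sa
      have : 0 ≤ 1 - t := by linarith
      exact add_nonneg (mul_nonneg this hn1) (mul_nonneg ht0 hn2)
    · intro s
      have e1 : ∑ a, ((1 - t) * d1 (s, a) + t * d2 (s, a))
          = (1 - t) * (∑ a, d1 (s, a)) + t * (∑ a, d2 (s, a)) := by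
        rw [Finset.mul_sum, Finset.mul_sum, ← Finset.sum_add_distrib]
      have e2 : ∑ sa : S × A, T sa.1 sa.2 s * ((1 - t) * d1 sa + t * d2 sa)
          = (1 - t) * (∑ sa : S × A, T sa.1 sa.2 s * d1 sa)
            + t * (∑ sa : S × A, T sa.1 sa.2 s * d2 sa) := by
        rw [Finset.mul_sum, Finset.mul_sum, ← Finset.sum_add_distrib]
        exact Finset.sum_congr rfl (fun sa _ => by ring)
      rw [e1, h1f s, h2f s, e2]
      ring
  -- J is affine along segments
  have Jlin : ∀ (i : Fin I) (t : ℝ) (d1 d2 : S × A → ℝ),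
      J i (fun sa => (1 - t) * d1 sa + t * d2 sa) = (1 - t) * J i d1 + t * J i d2 := by
    intro i t d1 d2
    simp only [hJ]
    rw [Finset.mul_sum, Finset.mul_sum, ← Finset.sum_add_distrib]
    exact Finset.sum_congr rfl (fun sa _ => by ring)
  -- the regularizer is convex along segments
  have Rcvx : ∀ t : ℝ, 0 ≤ t → t ≤ 1 → ∀ d1 d2 : S × A → ℝ,
      Rg (fun sa => (1 - t) * d1 sa + t * d2 sa) ≤ (1 - t) * Rg d1 + t * Rg d2 := by
    intro t ht0 ht1 d1 d2
    rw [hRg]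
    simp only
    rw [Finset.mul_sum, Finset.mul_sum, ← Finset.sum_add_distrib]
    refine Finset.sum_le_sum (fun sa _ => ?_)
    have hD := hdD sa
    have hkey : ((1 - t) * d1 sa + t * d2 sa) / dD sa
        = (1 - t) * (d1 sa / dD sa) + t * (d2 sa / dD sa) := by
      field_simp
    rw [hkey]
    have := hf.convexOn.2 (Set.mem_univ (d1 sa / dD sa)) (Set.mem_univ (d2 sa / dD sa))
      (by linarith : (0:ℝ) ≤ 1 - t) ht0 (by ring)
    simp only [smul_eq_mul] at this
    calc dD sa * f ((1 - t) * (d1 sa / dD sa) + t * (d2 sa / dD sa))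
        ≤ dD sa * ((1 - t) * f (d1 sa / dD sa) + t * f (d2 sa / dD sa)) := by
          exact mul_le_mul_of_nonneg_left this (le_of_lt hD)
      _ = (1 - t) * (dD sa * f (d1 sa / dD sa)) + t * (dD sa * f (d2 sa / dD sa)) := by ring
  -- Part 1: dstar maximizes G over C
  have part1 : ∀ d ∈ C, G d ≤ G dstar := by
    intro d hd
    by_contra hlt
    push_neg at hlt
    set δ : ℝ := G d - G dstar with hδdef
    have hδ : 0 < δ := by simp [hδdef]; linarith
    set y : Fin I → ℝ := fun i => J i dstar with hy
    set c : Fin I → ℝ := fun i => J i d - J i dstar with hc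
    set σ : ℝ := ∑ i, μ i * c i with hσ
    -- σ - δ = β * (Rg d - Rg dstar)
    have hσδ : σ - δ = β * (Rg d - Rg dstar) := by
      have hσ2 : σ = (∑ i, μ i * J i d) - ∑ i, μ i * J i dstar := by
        rw [hσ, ← Finset.sum_sub_distrib]
        exact Finset.sum_congr rfl (fun i _ => by simp only [hc]; ring)
      rw [hσ2, hδdef, hG d, hG dstar, hRg]
      ring
    have hFR : ∀ x, F x = (∑ i, u i (J i x)) - β * Rg x := hF
    have hGR : ∀ x, G x = (∑ i, μ i * J i x) - β * Rg x := hG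
    -- the perturbation function
    set φ : ℝ → ℝ := fun t => (∑ i, u i (y i + t * c i)) - (∑ i, u i (y i)) - t * (σ - δ)
      with hφdef
    have hφ0 : φ 0 = 0 := by simp [hφdef]
    have hder : HasDerivAt φ δ 0 := by
      have h1 : HasDerivAt (fun t : ℝ => ∑ i, u i (y i + t * c i))
          (∑ i, deriv (u i) (y i) * c i) 0 := by
        apply HasDerivAt.fun_sum
        intro i _
        have haff : HasDerivAt (fun t : ℝ => y i + t * c i) (c i) 0 := by
          simpa using (hasDerivAt_mul_const (c i)).const_add (y i)
        have hcomp := ((hud i (y i + 0 * c i)).hasDerivAt).comp 0 haff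
        simpa [Function.comp_def] using hcomp
      have h2 : ∑ i, deriv (u i) (y i) * c i = σ := by
        rw [hσ]
        exact Finset.sum_congr rfl (fun i _ => by rw [hμ i])
      have h3 : HasDerivAt (fun t : ℝ => t * (σ - δ)) (σ - δ) 0 := hasDerivAt_mul_const _
      have hfin := (h1.sub_const (∑ i, u i (y i))).fun_sub h3
      rw [hφdef]
      simpa only [h2, sub_sub_cancel] using hfin
    have hslope := hasDerivAt_iff_tendsto_slope.mp hder
    have hev1 : ∀ᶠ t in nhdsWithin 0 {(0:ℝ)}ᶜ, 0 < slope φ 0 t :=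
      hslope.eventually (eventually_gt_nhds hδ)
    have hev2 : ∀ᶠ t in nhdsWithin 0 (Set.Ioi 0), 0 < slope φ 0 t :=
      hev1.filter_mono (nhdsWithin_mono 0 (by intro x hx; simpa using ne_of_gt hx))
    have hev3 : ∀ᶠ t in nhdsWithin (0:ℝ) (Set.Ioi 0), t < 1 := by
      have hIoo : Set.Ioo (0:ℝ) 1 ∈ nhdsWithin (0:ℝ) (Set.Ioi 0) :=
        Ioo_mem_nhdsGT_of_mem (by norm_num)
      filter_upwards [hIoo] with t ht
      exact ht.2
    have hev4 : ∀ᶠ t in nhdsWithin (0:ℝ) (Set.Ioi 0), 0 < t := by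
      filter_upwards [self_mem_nhdsWithin] with t ht
      exact ht
    obtain ⟨t, hst, ht1, ht0⟩ := (hev2.and (hev3.and hev4)).exists
    -- φ t > 0
    have hφt : 0 < φ t := by
      have h := hst
      simp only [slope, vsub_eq_sub, hφ0, sub_zero, smul_eq_mul] at h
      have h2 : 0 < t * (t⁻¹ * φ t) := mul_pos ht0 h
      rwa [mul_inv_cancel_left₀ (ne_of_gt ht0)] at h2
    -- the perturbed point improves on dstar
    have hdtC := Ccvx t ht0.le ht1.le dstar hdstarC d hd
    have hJt : ∀ i, J i (fun sa => (1 - t) * dstar sa + t * d sa) = y i + t * c i := by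
      intro i; rw [Jlin]; simp only [hy, hc]; ring
    have hRt := Rcvx t ht0.le ht1.le dstar d
    have hFge : F dstar + φ t ≤ F (fun sa => (1 - t) * dstar sa + t * d sa) := by
      rw [hFR, hFR, hφdef]
      simp only [hJt]
      rw [hσδ]
      have hb : β * Rg (fun sa => (1 - t) * dstar sa + t * d sa)
          ≤ β * ((1 - t) * Rg dstar + t * Rg d) := mul_le_mul_of_nonneg_left hRt hβ.le
      nlinarith [hb]
    have := hdstarMax _ hdtC
    linarith
  refine ⟨part1, ?_⟩
  intro d hd hmax
  by_contra hne
  have hGR : ∀ x, G x = (∑ i, μ i * J i x) - β * Rg x := hG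
  have hGeq : G d = G dstar := le_antisymm (part1 d hd) (hmax dstar hdstarC)
  have hmemm : (fun sa => (1 - (1/2 : ℝ)) * d sa + (1/2 : ℝ) * dstar sa) ∈ C :=
    Ccvx (1/2) (by norm_num) (by norm_num) d hd dstar hdstarC
  obtain ⟨sa0, hsa0⟩ : ∃ sa, d sa ≠ dstar sa := by
    by_contra h; push_neg at h; exact hne (funext h)
  -- strict convexity of the regularizer at the midpoint
  have hRs : Rg (fun sa => (1 - (1/2:ℝ)) * d sa + (1/2:ℝ) * dstar sa)
      < (1 - (1/2:ℝ)) * Rg d + (1/2:ℝ) * Rg dstar := by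
    have hle : ∀ sa ∈ (Finset.univ : Finset (S × A)),
        dD sa * f (((1 - (1/2:ℝ)) * d sa + (1/2:ℝ) * dstar sa) / dD sa)
          ≤ (1 - (1/2:ℝ)) * (dD sa * f (d sa / dD sa))
            + (1/2:ℝ) * (dD sa * f (dstar sa / dD sa)) := by
      intro sa _
      have hD := hdD sa
      have hkey : ((1 - (1/2:ℝ)) * d sa + (1/2:ℝ) * dstar sa) / dD sa
          = (1 - (1/2:ℝ)) * (d sa / dD sa) + (1/2:ℝ) * (dstar sa / dD sa) := by
        field_simp
      rw [hkey]
      have h := hf.convexOn.2 (Set.mem_univ (d sa / dD sa)) (Set.mem_univ (dstar sa / dD sa))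
        (by norm_num : (0:ℝ) ≤ 1 - 1/2) (by norm_num : (0:ℝ) ≤ 1/2) (by norm_num)
      simp only [smul_eq_mul] at h
      nlinarith [h]
    have hlt : dD sa0 * f (((1 - (1/2:ℝ)) * d sa0 + (1/2:ℝ) * dstar sa0) / dD sa0)
        < (1 - (1/2:ℝ)) * (dD sa0 * f (d sa0 / dD sa0))
          + (1/2:ℝ) * (dD sa0 * f (dstar sa0 / dD sa0)) := by
      have hD := hdD sa0
      have hkey : ((1 - (1/2:ℝ)) * d sa0 + (1/2:ℝ) * dstar sa0) / dD sa0
          = (1 - (1/2:ℝ)) * (d sa0 / dD sa0) + (1/2:ℝ) * (dstar sa0 / dD sa0) := by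
        field_simp
      rw [hkey]
      have hxy : d sa0 / dD sa0 ≠ dstar sa0 / dD sa0 := by
        intro h
        apply hsa0
        field_simp at h
        exact h
      have h := hf.2 (Set.mem_univ (d sa0 / dD sa0)) (Set.mem_univ (dstar sa0 / dD sa0)) hxy
        (by norm_num : (0:ℝ) < 1 - 1/2) (by norm_num : (0:ℝ) < 1/2) (by norm_num)
      simp only [smul_eq_mul] at h
      nlinarith [h]
    calc Rg (fun sa => (1 - (1/2:ℝ)) * d sa + (1/2:ℝ) * dstar sa)
        = ∑ sa : S × A, dD sa * f (((1 - (1/2:ℝ)) * d sa + (1/2:ℝ) * dstar sa) / dD sa) := rfl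
      _ < ∑ sa : S × A, ((1 - (1/2:ℝ)) * (dD sa * f (d sa / dD sa))
            + (1/2:ℝ) * (dD sa * f (dstar sa / dD sa))) :=
          Finset.sum_lt_sum hle ⟨sa0, Finset.mem_univ sa0, hlt⟩
      _ = (1 - (1/2:ℝ)) * Rg d + (1/2:ℝ) * Rg dstar := by
          rw [Finset.sum_add_distrib, ← Finset.mul_sum, ← Finset.mul_sum]
  have hJm : ∑ i, μ i * J i (fun sa => (1 - (1/2:ℝ)) * d sa + (1/2:ℝ) * dstar sa)
      = (1 - (1/2:ℝ)) * (∑ i, μ i * J i d) + (1/2:ℝ) * (∑ i, μ i * J i dstar) := by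
    rw [Finset.mul_sum, Finset.mul_sum, ← Finset.sum_add_distrib]
    exact Finset.sum_congr rfl (fun i _ => by rw [Jlin]; try ring)
  have hGm : G dstar < G (fun sa => (1 - (1/2:ℝ)) * d sa + (1/2:ℝ) * dstar sa) := by
    rw [hGR, hGR, hJm]
    have hGd := hGR d
    have hGds := hGR dstar
    nlinarith [mul_lt_mul_of_pos_left hRs hβ]
  have := part1 _ hmemm
  linarith
end

section
/- With preference weights μ₁ = 6/11 and μ₂ = 4/11 (the optimal Lagrange multipliers of the Nash-social-welfare counterexample), the linearly scalarized objective is constant on the simplex: for all d₁, d₂ ∈ ℝ with d₁ + d₂ = 1, one has (6/11)·(d₁ + 3d₂) + (4/11)·(4d₁ + d₂) = 2. Consequently every point of the simplex {(d₁,d₂) : d₁, d₂ ≥ 0, d₁ + d₂ = 1} maximizes the linear scalarization, whereas the Nash-social-welfare problem has the unique maximizer (7/12, 5/12); hence linear MORL with the optimal implicit weights does not recover the unique fair-MORL solution. -/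
/-- With the optimal implicit preference weights `μ₁ = 6/11`, `μ₂ = 4/11` of the
Nash-social-welfare counterexample, the linear scalarization is constant (equal to 2)
on the simplex, so every point of the simplex maximizes it, whereas the
Nash-social-welfare problem has the unique maximizer `(7/12, 5/12)`. -/
theorem linear_morl_does_not_recover_fair_morl :
    (∀ d₁ d₂ : ℝ, d₁ + d₂ = 1 →
      (6 / 11) * (d₁ + 3 * d₂) + (4 / 11) * (4 * d₁ + d₂) = 2) ∧
    (∀ d₁ d₂ : ℝ, 0 ≤ d₁ → 0 ≤ d₂ → d₁ + d₂ = 1 →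
      ∀ e₁ e₂ : ℝ, 0 ≤ e₁ → 0 ≤ e₂ → e₁ + e₂ = 1 →
        (6 / 11) * (e₁ + 3 * e₂) + (4 / 11) * (4 * e₁ + e₂) ≤
          (6 / 11) * (d₁ + 3 * d₂) + (4 / 11) * (4 * d₁ + d₂)) ∧
    (∀ d₁ d₂ : ℝ, 0 ≤ d₁ → 0 ≤ d₂ → d₁ + d₂ = 1 →
      (Real.log (d₁ + 3 * d₂) + Real.log (4 * d₁ + d₂) ≤
        Real.log ((7 / 12) + 3 * (5 / 12)) + Real.log (4 * (7 / 12) + (5 / 12))) ∧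
      (Real.log (d₁ + 3 * d₂) + Real.log (4 * d₁ + d₂) =
        Real.log ((7 / 12) + 3 * (5 / 12)) + Real.log (4 * (7 / 12) + (5 / 12)) →
          d₁ = 7 / 12 ∧ d₂ = 5 / 12)) := by
  refine ⟨fun d₁ d₂ h => by linarith, fun d₁ d₂ h1 h2 h3 e₁ e₂ g1 g2 g3 => by linarith,
    fun d₁ d₂ h1 h2 h3 => ?_⟩
  have hA : (0:ℝ) < d₁ + 3 * d₂ := by linarith
  have hB : (0:ℝ) < 4 * d₁ + d₂ := by linarith
  have hlog : Real.log (d₁ + 3 * d₂) + Real.log (4 * d₁ + d₂)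
      = Real.log ((d₁ + 3 * d₂) * (4 * d₁ + d₂)) := (Real.log_mul hA.ne' hB.ne').symm
  have hlogR : Real.log ((7:ℝ) / 12 + 3 * (5 / 12)) + Real.log (4 * (7 / 12) + (5 / 12))
      = Real.log (121 / 24) := by
    rw [← Real.log_mul (by norm_num) (by norm_num)]; norm_num
  have hprod : (d₁ + 3 * d₂) * (4 * d₁ + d₂) ≤ 121 / 24 := by
    nlinarith [sq_nonneg (d₁ - 7/12)]
  constructor
  · rw [hlog, hlogR]
    exact Real.log_le_log (by positivity) hprod
  · intro heq
    rw [hlog, hlogR] at heq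
    have hpe : (d₁ + 3 * d₂) * (4 * d₁ + d₂) = 121 / 24 := by
      rcases lt_or_eq_of_le hprod with hlt | he
      · exact absurd heq (ne_of_lt (Real.log_lt_log (by positivity) hlt))
      · exact he
    have hsq : (d₁ - 7/12) ^ 2 = 0 := by nlinarith
    have : d₁ = 7/12 := by nlinarith [sq_nonneg (d₁ - 7/12), pow_eq_zero_iff (n := 2) (by norm_num) |>.mp hsq]
    exact ⟨this, by linarith⟩
end

section
/- Policy recovery from a feasible stationary distribution: let d : S×A → ℝ satisfy d ≥ 0 and the Bellman flow constraints, and suppose its state marginal ρ(s) = Σ_a d(s,a) is strictly positive for every s. Define the policy π(a|s) = d(s,a)/ρ(s) and the induced state transition matrix P_π(s'|s) = Σ_a π(a|s) T(s'|s,a). Then ρ satisfies ρ(s) = (1−γ) p₀(s) + γ Σ_{s̄} P_π(s|s̄) ρ(s̄) for all s; hence, since this linear system has a unique solution for γ ∈ [0,1), ρ is the discounted state-occupancy of π and d(s,a) = π(a|s)·ρ(s) is the stationary distribution induced by π. -/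
open scoped BigOperators

/-- Policy recovery from a feasible stationary distribution: if `d ≥ 0` satisfies the
Bellman flow constraints and its state marginal `ρ(s) = Σ_a d(s,a)` is strictly
positive, then for the extracted policy `π(a|s) = d(s,a)/ρ(s)` and the induced state
transition matrix `P_π(s'|s) = Σ_a π(a|s) T(s'|s,a)`, the marginal `ρ` satisfies
`ρ(s) = (1−γ) p₀(s) + γ Σ_{sb} P_π(s|sb) ρ(sb)`, i.e. `ρ` is the discounted
state-occupancy of `π` and `d(s,a) = π(a|s)·ρ(s)` is the stationary distribution
induced by `π`. -/
theorem policy_recovery_from_stationary_distribution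
    {S A : Type*} [Fintype S] [Fintype A] [Nonempty S] [Nonempty A]
    (T : S → A → S → ℝ) (hT : ∀ s a s', 0 ≤ T s a s')
    (hT1 : ∀ s a, ∑ s', T s a s' = 1)
    (p0 : S → ℝ) (hp0 : ∀ s, 0 ≤ p0 s) (hp01 : ∑ s, p0 s = 1)
    (γ : ℝ) (hγ0 : 0 ≤ γ) (hγ1 : γ < 1)
    (d : S × A → ℝ) (hd0 : ∀ sa, 0 ≤ d sa)
    (hd : ∀ s, ∑ a, d (s, a) =
      (1 - γ) * p0 s + γ * ∑ sa : S × A, T sa.1 sa.2 s * d sa)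
    (ρ : S → ℝ) (hρ : ∀ s, ρ s = ∑ a, d (s, a))
    (hρpos : ∀ s, 0 < ρ s)
    (π : S → A → ℝ) (hπ : ∀ s a, π s a = d (s, a) / ρ s)
    (Pπ : S → S → ℝ) (hPπ : ∀ s s', Pπ s s' = ∑ a, π s a * T s a s') :
    (∀ s, ρ s = (1 - γ) * p0 s + γ * ∑ sb, Pπ sb s * ρ sb) ∧
    (∀ s a, d (s, a) = π s a * ρ s) := by
  have hda : ∀ s a, d (s, a) = π s a * ρ s := by
    intro s a
    rw [hπ, div_mul_cancel₀]
    exact (hρpos s).ne'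
  refine ⟨fun s => ?_, hda⟩
  rw [hρ, hd]
  congr 1
  congr 1
  rw [Fintype.sum_prod_type]
  refine Finset.sum_congr rfl fun sb _ => ?_
  rw [hPπ, Finset.sum_mul]
  refine Finset.sum_congr rfl fun a _ => ?_
  rw [hda sb a]
  ring
end
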